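/- Under assumption (A1), the sequence {x^k} generated by the MPG algorithm converges to a weakly Pareto optimal point of the multiobjective problem min F. -/

import Mathlib

open RealInnerProductSpace Filter Topology


section Aux
variable {E : Type*} [NormedAddCommGroup E] [InnerProductSpace ℝ E] [CompleteSpace E]

lemma mpg_comb_identity (a b : E) (l : ℝ) :
    ‖(1 - l) • a + l • b‖ ^ 2
      = (1 - l) * ‖a‖ ^ 2 + l * ‖b‖ ^ 2 - l * (1 - l) * ‖a - b‖ ^ 2 := by
  have h : ∀ v : E, ‖v‖ ^ 2 = ⟪v, v⟫ := fun v => (real_inner_self_eq_norm_sq v).symm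
  simp only [h]
  simp only [inner_add_add_self, inner_sub_sub_self, real_inner_smul_left,
    real_inner_smul_right]
  ring

lemma mpg_grad_ineq {f : E → ℝ} {g : E} {x : E}
    (hf : ConvexOn ℝ Set.univ f) (hg : HasGradientAt f g x) (y : E) :
    f x + ⟪g, y - x⟫ ≤ f y := by
  set φ : ℝ → ℝ := fun s => f (x + s • (y - x)) with hφ
  have hline : HasDerivAt (fun s : ℝ => x + s • (y - x)) (y - x) (0 : ℝ) := by
    simpa using ((hasDerivAt_id (0 : ℝ)).smul_const (y - x)).const_add x
  have hd : HasDerivAt φ ⟪g, y - x⟫ (0 : ℝ) := by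
    have h0 : HasFDerivAt f (InnerProductSpace.toDual ℝ E g) (x + (0 : ℝ) • (y - x)) := by
      simpa using hg.hasFDerivAt
    have := h0.comp_hasDerivAt (0 : ℝ) hline
    simp only [InnerProductSpace.toDual_apply_apply] at this
    exact this
  have hslope : ∀ s ∈ Set.Ioo (0:ℝ) 1, slope φ 0 s ≤ f y - f x := by
    intro s hs
    have hcomb : x + s • (y - x) = (1 - s) • x + s • y := by
      rw [smul_sub, sub_smul, one_smul]; abel
    have := hf.2 (Set.mem_univ x) (Set.mem_univ y) (by linarith [hs.1, hs.2] : (0:ℝ) ≤ 1 - s)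
      hs.1.le (by ring)
    have hφs : φ s ≤ (1 - s) * f x + s * f y := by
      rw [hφ]; simpa [hcomb, smul_eq_mul] using this
    have hφ0 : φ 0 = f x := by simp [hφ]
    have hgoal : (φ s - φ 0) / (s - 0) ≤ f y - f x := by
      rw [sub_zero, div_le_iff₀ hs.1]
      calc φ s - φ 0 ≤ (1 - s) * f x + s * f y - f x := by rw [hφ0]; linarith
      _ = (f y - f x) * s := by ring
    simpa [slope_def_field] using hgoal
  have htend : Tendsto (slope φ 0) (𝓝[>] 0) (𝓝 ⟪g, y - x⟫) :=
    (hasDerivAt_iff_tendsto_slope.1 hd).mono_left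
      (nhdsWithin_mono _ (by intro s hs; exact ne_of_gt hs))
  have : ⟪g, y - x⟫ ≤ f y - f x := by
    refine le_of_tendsto htend ?_
    filter_upwards [Ioo_mem_nhdsGT_of_mem (Set.mem_Ico.2 ⟨le_refl _, zero_lt_one⟩)] with s hs
    exact hslope s hs
  linarith

lemma mpg_quasiFejer {a e : ℕ → ℝ} (ha : ∀ k, 0 ≤ a k) (he : ∀ k, 0 ≤ e k)
    (hrec : ∀ k, a (k + 1) ≤ a k + e k) (hsum : Summable e) :
    ∃ L, Tendsto a atTop (𝓝 L) := by
  set tail : ℕ → ℝ := fun k => ∑' i, e (i + k) with htail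
  have htails : ∀ k, Summable fun i => e (i + k) := fun k => (summable_nat_add_iff k).2 hsum
  have htailrec : ∀ k, tail k = e k + tail (k + 1) := by
    intro k
    have := Summable.tsum_eq_zero_add (f := fun i => e (i + k)) (htails k)
    simpa [htail, add_assoc, add_comm, add_left_comm] using this
  set b : ℕ → ℝ := fun k => a k + tail k with hb
  have hbanti : Antitone b := by
    apply antitone_nat_of_succ_le
    intro k
    have := hrec k
    have := htailrec k
    simp only [hb]; linarith
  have hbdd : BddBelow (Set.range b) := by
    refine ⟨0, ?_⟩
    rintro _ ⟨k, rfl⟩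
    have : 0 ≤ tail k := tsum_nonneg fun i => he _
    have := ha k
    simp only [hb]; linarith
  have hbconv : Tendsto b atTop (𝓝 (⨅ k, b k)) := tendsto_atTop_ciInf hbanti hbdd
  have htail0 : Tendsto tail atTop (𝓝 0) := tendsto_sum_nat_add e
  refine ⟨⨅ k, b k, ?_⟩
  have : Tendsto (fun k => b k - tail k) atTop (𝓝 ((⨅ k, b k) - 0)) := hbconv.sub htail0
  simpa [hb] using this

end Aux

set_option maxHeartbeats 2000000 in
/-- Full convergence of the MPG algorithm: under assumption (A1), the generated sequence
converges to a weakly Pareto optimal point of the problem `min F`. -/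
theorem MPG_convergence {n m : ℕ} (hm : 0 < m)
    (G : Fin m → EuclideanSpace ℝ (Fin n) → ℝ)
    (G' : Fin m → EuclideanSpace ℝ (Fin n) → EuclideanSpace ℝ (Fin n))
    (H : Fin m → EuclideanSpace ℝ (Fin n) → ℝ)
    (dom : Set (EuclideanSpace ℝ (Fin n)))
    (hGconv : ∀ j, ConvexOn ℝ Set.univ (G j))
    (hGdiff : ∀ j x, HasGradientAt (G j) (G' j x) x)
    (hG'cont : ∀ j, Continuous (G' j))
    (hHconv : ∀ j, ConvexOn ℝ dom (H j))
    (hHcont : ∀ j, ContinuousOn (H j) dom)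
    (hdomne : dom.Nonempty) (hdomcl : IsClosed dom) (hdomconv : Convex ℝ dom)
    (α γ τ₁ τ₂ : ℝ) (hα : 0 < α) (hγ : 0 < γ) (hγ2 : γ < 2 / α)
    (hτ₁ : 0 < τ₁) (hτ₁₂ : τ₁ < τ₂) (hτ₂ : τ₂ < 1)
    (x p : ℕ → EuclideanSpace ℝ (Fin n)) (t : ℕ → ℝ)
    (hx : ∀ k, x k ∈ dom) (hp : ∀ k, p k ∈ dom)
    (hpmin : ∀ k, IsMinOn
      (fun u => (⨆ i, (⟪G' i (x k), u - x k⟫ + H i u - H i (x k))) +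
        1 / (2 * α) * ‖u - x k‖ ^ 2) dom (p k))
    (ht : ∀ k, 0 < t k ∧ t k ≤ 1)
    (hiter : ∀ k, x (k + 1) = x k + t k • (p k - x k))
    (hLS : ∀ k,
      (∃ jstar : Fin m,
        (∀ j, ⟪G' j (x k), p k - x k⟫ ≤ ⟪G' jstar (x k), p k - x k⟫) ∧
        G jstar (x (k + 1)) ≤ G jstar (x k) + t k * ⟪G' jstar (x k), p k - x k⟫ +
          t k * (γ / 2) * ‖p k - x k‖ ^ 2 ∧
        (∀ j, G j (x (k + 1)) + H j (x (k + 1)) ≤ G j (x k) + H j (x k))) ∨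
      (∀ j, G j (x (k + 1)) ≤ G j (x k) + t k * ⟪G' j (x k), p k - x k⟫ +
        t k * (γ / 2) * ‖p k - x k‖ ^ 2))
    (hbacktrack : ∀ k, t k = 1 ∨ ∃ i : Fin m, ∃ tbar : ℝ, 0 < tbar ∧ tbar ≤ t k / τ₁ ∧
      G i (x k + tbar • (p k - x k)) > G i (x k) + tbar * ⟪G' i (x k), p k - x k⟫ +
        tbar * (γ / 2) * ‖p k - x k‖ ^ 2)
    (hA1 : ∀ y : ℕ → EuclideanSpace ℝ (Fin n), (∀ k, y k ∈ dom) →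
      (∀ k j, G j (y (k + 1)) + H j (y (k + 1)) ≤ G j (y k) + H j (y k)) →
      ∃ ybar ∈ dom, ∀ k j, G j ybar + H j ybar ≤ G j (y k) + H j (y k)) :
    ∃ xbar ∈ dom, Tendsto x atTop (𝓝 xbar) ∧
      ¬ ∃ y ∈ dom, ∀ j, G j y + H j y < G j xbar + H j xbar := by
  classical
  haveI : Nonempty (Fin m) := ⟨⟨0, hm⟩⟩
  set j0 : Fin m := ⟨0, hm⟩ with hj0def
  have hγα : γ * α < 2 := (lt_div_iff₀ hα).1 hγ2
  have hcoefpos : (0:ℝ) < 1 - γ * α / 2 := by linarith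
  have hα2 : (0:ℝ) < 2 * α := by linarith
  have hbddr : ∀ (k : ℕ) (u : EuclideanSpace ℝ (Fin n)),
      BddAbove (Set.range fun i : Fin m => ⟪G' i (x k), u - x k⟫ + H i u - H i (x k)) :=
    fun k u => Set.Finite.bddAbove (Set.finite_range _)
  set ψ : ℕ → EuclideanSpace ℝ (Fin n) → ℝ :=
    fun k u => ⨆ i, (⟪G' i (x k), u - x k⟫ + H i u - H i (x k)) with hψdef
  set S : ℕ → ℝ := fun k => ψ k (p k) with hSdef
  have hψx : ∀ k, ψ k (x k) = 0 := by
    intro k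
    simp only [hψdef]
    have : (fun i : Fin m => ⟪G' i (x k), x k - x k⟫ + H i (x k) - H i (x k))
        = fun _ : Fin m => (0:ℝ) := by
      funext i; simp
    rw [this, ciSup_const]
  have hterm_le : ∀ k (j : Fin m),
      ⟪G' j (x k), p k - x k⟫ + H j (p k) - H j (x k) ≤ S k := by
    intro k j
    simp only [hSdef, hψdef]
    exact le_ciSup (hbddr k (p k)) j
  have hmin2 : ∀ k, ∀ u ∈ dom,
      2 * α * S k + ‖p k - x k‖ ^ 2 ≤ 2 * α * ψ k u + ‖u - x k‖ ^ 2 := by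
    intro k u hu
    have h := isMinOn_iff.1 (hpmin k) u hu
    have e : ∀ X Y : ℝ, 2 * α * (X + 1 / (2 * α) * Y) = 2 * α * X + Y := by
      intro X Y; field_simp
    have h2 := mul_le_mul_of_nonneg_left h (le_of_lt hα2)
    simp only [hSdef, hψdef]
    calc 2 * α * (⨆ i, (⟪G' i (x k), p k - x k⟫ + H i (p k) - H i (x k))) + ‖p k - x k‖ ^ 2
        = 2 * α * ((⨆ i, (⟪G' i (x k), p k - x k⟫ + H i (p k) - H i (x k)))
            + 1 / (2 * α) * ‖p k - x k‖ ^ 2) := (e _ _).symm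
      _ ≤ 2 * α * ((⨆ i, (⟪G' i (x k), u - x k⟫ + H i u - H i (x k)))
            + 1 / (2 * α) * ‖u - x k‖ ^ 2) := h2
      _ = 2 * α * (⨆ i, (⟪G' i (x k), u - x k⟫ + H i u - H i (x k))) + ‖u - x k‖ ^ 2 := e _ _
  have hψconv : ∀ k (u v : EuclideanSpace ℝ (Fin n)), u ∈ dom → v ∈ dom →
      ∀ l : ℝ, 0 ≤ l → l ≤ 1 →
      ψ k ((1 - l) • u + l • v) ≤ (1 - l) * ψ k u + l * ψ k v := by
    intro k u v hu hv l hl0 hl1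
    simp only [hψdef]
    refine ciSup_le fun i => ?_
    have hrepr : ((1 - l) • u + l • v) - x k = (1 - l) • (u - x k) + l • (v - x k) := by
      module
    have hinner : ⟪G' i (x k), ((1 - l) • u + l • v) - x k⟫
        = (1 - l) * ⟪G' i (x k), u - x k⟫ + l * ⟪G' i (x k), v - x k⟫ := by
      rw [hrepr, inner_add_right, real_inner_smul_right, real_inner_smul_right]
    have hH : H i ((1 - l) • u + l • v) ≤ (1 - l) * H i u + l * H i v := by
      have := (hHconv i).2 hu hv (by linarith : (0:ℝ) ≤ 1 - l) hl0 (by ring)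
      simpa [smul_eq_mul] using this
    have hiu : ⟪G' i (x k), u - x k⟫ + H i u - H i (x k)
        ≤ ⨆ i', (⟪G' i' (x k), u - x k⟫ + H i' u - H i' (x k)) := le_ciSup (hbddr k u) i
    have hiv : ⟪G' i (x k), v - x k⟫ + H i v - H i (x k)
        ≤ ⨆ i', (⟪G' i' (x k), v - x k⟫ + H i' v - H i' (x k)) := le_ciSup (hbddr k v) i
    have e1 := mul_le_mul_of_nonneg_left hiu (by linarith : (0:ℝ) ≤ 1 - l)
    have e2 := mul_le_mul_of_nonneg_left hiv hl0
    rw [hinner]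
    nlinarith [hH, e1, e2]
  have hsc : ∀ k, ∀ z ∈ dom,
      2 * α * S k + ‖p k - x k‖ ^ 2 + ‖z - p k‖ ^ 2
        ≤ 2 * α * ψ k z + ‖z - x k‖ ^ 2 := by
    intro k z hz
    have hD0 : (0:ℝ) ≤ ‖z - p k‖ ^ 2 := sq_nonneg _
    refine le_of_forall_pos_le_add fun ε hε => ?_
    set l : ℝ := min (1/2) (ε / (‖z - p k‖ ^ 2 + 1)) with hldef
    have hl0 : 0 < l := lt_min (by norm_num) (by positivity)
    have hl1 : l < 1 := lt_of_le_of_lt (min_le_left _ _) (by norm_num)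
    have hlD : l * ‖z - p k‖ ^ 2 ≤ ε := by
      have h1 : l ≤ ε / (‖z - p k‖ ^ 2 + 1) := min_le_right _ _
      have h2 : l * ‖z - p k‖ ^ 2 ≤ (ε / (‖z - p k‖ ^ 2 + 1)) * ‖z - p k‖ ^ 2 :=
        mul_le_mul_of_nonneg_right h1 hD0
      have h3 : (ε / (‖z - p k‖ ^ 2 + 1)) * ‖z - p k‖ ^ 2 ≤ ε := by
        rw [div_mul_eq_mul_div, div_le_iff₀ (by positivity)]
        nlinarith
      linarith
    have hw : (1 - l) • p k + l • z ∈ dom := hdomconv (hp k) hz (by linarith) hl0.le (by ring)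
    have hm2 := hmin2 k _ hw
    have hψw := hψconv k (p k) z (hp k) hz l hl0.le hl1.le
    have hq : ‖((1 - l) • p k + l • z) - x k‖ ^ 2
        = (1 - l) * ‖p k - x k‖ ^ 2 + l * ‖z - x k‖ ^ 2 - l * (1 - l) * ‖z - p k‖ ^ 2 := by
      have hrepr : ((1 - l) • p k + l • z) - x k = (1 - l) • (p k - x k) + l • (z - x k) := by
        module
      rw [hrepr, mpg_comb_identity]
      have hpz : (p k - x k) - (z - x k) = -(z - p k) := by abel
      rw [hpz, norm_neg]
    rw [hq] at hm2
    have hψw2 := mul_le_mul_of_nonneg_left hψw (le_of_lt hα2)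
    have key : l * (2 * α * S k + ‖p k - x k‖ ^ 2 + (1 - l) * ‖z - p k‖ ^ 2)
        ≤ l * (2 * α * ψ k z + ‖z - x k‖ ^ 2) := by
      simp only [hSdef] at *
      nlinarith [hm2, hψw2]
    have key2 : 2 * α * S k + ‖p k - x k‖ ^ 2 + (1 - l) * ‖z - p k‖ ^ 2
        ≤ 2 * α * ψ k z + ‖z - x k‖ ^ 2 := le_of_mul_le_mul_left key hl0
    nlinarith [hlD]
  have h2αS : ∀ k, 2 * α * S k + 2 * ‖p k - x k‖ ^ 2 ≤ 0 := by
    intro k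
    have h := hsc k (x k) (hx k)
    rw [hψx k] at h
    rw [norm_sub_rev (x k) (p k)] at h
    simp only [sub_self, norm_zero] at h
    nlinarith [h]
  have hS0 : ∀ k, S k ≤ 0 := by
    intro k
    by_contra hcon
    push_neg at hcon
    nlinarith [h2αS k, sq_nonneg ‖p k - x k‖, mul_pos hα hcon]
  have hd2 : ∀ k, ‖p k - x k‖ ^ 2 ≤ -α * S k := by
    intro k; nlinarith [h2αS k]
  have hxcomb : ∀ k, x (k + 1) = (1 - t k) • x k + t k • p k := by
    intro k; rw [hiter k]; module
  have hHcomb : ∀ k (j : Fin m),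
      H j (x (k + 1)) ≤ H j (x k) + t k * (H j (p k) - H j (x k)) := by
    intro k j
    have h := (hHconv j).2 (hx k) (hp k)
      (by linarith [(ht k).2] : (0:ℝ) ≤ 1 - t k) (ht k).1.le (by ring)
    rw [hxcomb k]
    calc H j ((1 - t k) • x k + t k • p k) ≤ (1 - t k) • H j (x k) + t k • H j (p k) := h
      _ = H j (x k) + t k * (H j (p k) - H j (x k)) := by
          simp only [smul_eq_mul]; ring
  have hkey : ∀ k (j : Fin m),
      G j (x (k + 1)) ≤ G j (x k) + t k * ⟪G' j (x k), p k - x k⟫ +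
        t k * (γ / 2) * ‖p k - x k‖ ^ 2 →
      G j (x (k + 1)) + H j (x (k + 1))
        ≤ (G j (x k) + H j (x k)) + t k * (1 - γ * α / 2) * S k := by
    intro k j hj
    have h1 := hHcomb k j
    have h3 : t k * (⟪G' j (x k), p k - x k⟫ + H j (p k) - H j (x k)) ≤ t k * S k :=
      mul_le_mul_of_nonneg_left (hterm_le k j) (ht k).1.le
    have h4 : t k * (γ / 2) * ‖p k - x k‖ ^ 2 ≤ t k * (γ / 2) * (-α * S k) :=
      mul_le_mul_of_nonneg_left (hd2 k)
        (mul_nonneg (ht k).1.le (by linarith : (0:ℝ) ≤ γ / 2))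
    nlinarith [hj, h1, h3, h4]
  have hdec : ∀ k, (∀ j, G j (x (k + 1)) + H j (x (k + 1)) ≤ G j (x k) + H j (x k)) ∧
      ∃ j, G j (x (k + 1)) + H j (x (k + 1))
        ≤ (G j (x k) + H j (x k)) + t k * (1 - γ * α / 2) * S k := by
    intro k
    rcases hLS k with ⟨js, _, harm, hall⟩ | hall
    · exact ⟨hall, js, hkey k js harm⟩
    · have hprod : t k * (1 - γ * α / 2) * S k ≤ 0 :=
        mul_nonpos_of_nonneg_of_nonpos
          (mul_nonneg (ht k).1.le (by linarith)) (hS0 k)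
      exact ⟨fun j => by nlinarith [hkey k j (hall j), hprod],
        j0, hkey k j0 (hall j0)⟩
  obtain ⟨x0bar, hx0dom, hx0le⟩ := hA1 x hx (fun k j => (hdec k).1 j)
  set Φ : ℕ → ℝ := fun k => ∑ j, (G j (x k) + H j (x k)) with hΦdef
  have hΦrec : ∀ k, Φ (k + 1) ≤ Φ k + t k * (1 - γ * α / 2) * S k := by
    intro k
    obtain ⟨jk, hjk⟩ := (hdec k).2
    have hle : ∀ j : Fin m, G j (x (k + 1)) + H j (x (k + 1))
        ≤ (G j (x k) + H j (x k)) + (if j = jk then t k * (1 - γ * α / 2) * S k else 0) := by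
      intro j
      by_cases hj : j = jk
      · subst hj; simpa using hjk
      · simpa [hj] using (hdec k).1 j
    calc Φ (k + 1) ≤ ∑ j, ((G j (x k) + H j (x k))
          + (if j = jk then t k * (1 - γ * α / 2) * S k else 0)) :=
        Finset.sum_le_sum fun j _ => hle j
      _ = Φ k + t k * (1 - γ * α / 2) * S k := by
        rw [Finset.sum_add_distrib, Finset.sum_ite_eq' Finset.univ jk]
        simp [hΦdef]
  have hΦlow : ∀ N, (∑ j, (G j x0bar + H j x0bar)) ≤ Φ N :=
    fun N => Finset.sum_le_sum fun j _ => hx0le N j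
  have hpart : ∀ N, Φ N + ∑ i ∈ Finset.range N, (t i * (1 - γ * α / 2) * (-S i)) ≤ Φ 0 := by
    intro N
    induction N with
    | zero => simp
    | succ N ih =>
      rw [Finset.sum_range_succ]
      have := hΦrec N
      linarith
  have htSsum0 : Summable fun k => t k * (1 - γ * α / 2) * (-S k) := by
    refine summable_of_sum_range_le (c := Φ 0 - ∑ j, (G j x0bar + H j x0bar)) (fun k => ?_) (fun N => ?_)
    · exact mul_nonneg (mul_nonneg (ht k).1.le (by linarith)) (by linarith [hS0 k])
    · linarith [hpart N, hΦlow N]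
  have htSsum : Summable fun k => t k * (-S k) := by
    refine (htSsum0.mul_left ((1 - γ * α / 2)⁻¹)).congr fun k => ?_
    have hne : (1 - γ * α / 2) ≠ 0 := ne_of_gt hcoefpos
    have hinv : (1 - γ * α / 2)⁻¹ * (1 - γ * α / 2) = 1 := inv_mul_cancel₀ hne
    linear_combination (t k * (-S k)) * hinv
  set e : ℕ → ℝ := fun k => 2 * α * (t k * (-S k)) with hedef
  have he0 : ∀ k, 0 ≤ e k := by
    intro k
    have h1 : (0:ℝ) ≤ t k * (-S k) := mul_nonneg (ht k).1.le (by linarith [hS0 k])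
    simp only [hedef]
    exact mul_nonneg (by linarith) h1
  have hesum : Summable e := htSsum.mul_left _
  have hfejer : ∀ z, z ∈ dom → (∀ k (j : Fin m), G j z + H j z ≤ G j (x k) + H j (x k)) →
      ∀ k, ‖x (k + 1) - z‖ ^ 2 ≤ ‖x k - z‖ ^ 2 + e k := by
    intro z hz hzle k
    have hT : ψ k z ≤ 0 := by
      simp only [hψdef]
      refine ciSup_le fun i => ?_
      have h1 := mpg_grad_ineq (hGconv i) (hGdiff i (x k)) z
      have h2 := hzle k i
      linarith
    have h2 := hsc k z hz
    have h3 : 2 * α * ψ k z ≤ 0 := mul_nonpos_of_nonneg_of_nonpos (le_of_lt hα2) hT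
    have e1 : ‖z - p k‖ = ‖p k - z‖ := norm_sub_rev _ _
    have e2 : ‖z - x k‖ = ‖x k - z‖ := norm_sub_rev _ _
    rw [e1, e2] at h2
    have hcombeq : x (k + 1) - z = (1 - t k) • (x k - z) + t k • (p k - z) := by
      rw [hxcomb k]; module
    rw [hcombeq, mpg_comb_identity]
    have hxz : (x k - z) - (p k - z) = -(p k - x k) := by abel
    rw [hxz, norm_neg]
    have ht1 := (ht k).1
    have ht2 := (ht k).2
    simp only [hedef]
    nlinarith [mul_le_mul_of_nonneg_left h2 ht1.le, sq_nonneg ‖p k - x k‖,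
      mul_nonneg (mul_nonneg ht1.le (by linarith : (0:ℝ) ≤ 1 - t k)) (sq_nonneg ‖p k - x k‖),
      mul_nonneg ht1.le (sq_nonneg ‖p k - x k‖),
      mul_nonpos_of_nonneg_of_nonpos ht1.le h3]
  have hfx0 := hfejer x0bar hx0dom hx0le
  have hbound : ∀ k, ‖x k - x0bar‖ ^ 2 ≤ ‖x 0 - x0bar‖ ^ 2 + ∑' i, e i := by
    have hpartial : ∀ k, ‖x k - x0bar‖ ^ 2 ≤ ‖x 0 - x0bar‖ ^ 2 + ∑ i ∈ Finset.range k, e i := by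
      intro k
      induction k with
      | zero => simp
      | succ k ih =>
        rw [Finset.sum_range_succ]
        have := hfx0 k
        linarith
    intro k
    have := Summable.sum_le_tsum (Finset.range k) (fun i _ => he0 i) hesum
    linarith [hpartial k]
  have hxball : ∀ k, x k ∈ Metric.closedBall x0bar
      (Real.sqrt (‖x 0 - x0bar‖ ^ 2 + ∑' i, e i)) := by
    intro k
    rw [Metric.mem_closedBall, dist_eq_norm]
    rw [← Real.sqrt_sq (norm_nonneg (x k - x0bar))]
    exact Real.sqrt_le_sqrt (hbound k)
  obtain ⟨xhat, -, φ1, hφ1mono, hφ1tend⟩ :=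
    tendsto_subseq_of_bounded Metric.isBounded_closedBall hxball
  have hxhatdom : xhat ∈ dom :=
    hdomcl.mem_of_tendsto hφ1tend (Filter.Eventually.of_forall fun l => hx _)
  have hGcont : ∀ i : Fin m, Continuous (G i) :=
    fun i => continuous_iff_continuousAt.2 fun u => (hGdiff i u).hasFDerivAt.continuousAt
  have hFanti : ∀ j : Fin m, Antitone fun k => G j (x k) + H j (x k) :=
    fun j => antitone_nat_of_succ_le fun k => (hdec k).1 j
  have hFtend : ∀ j : Fin m, Tendsto (fun l => G j (x (φ1 l)) + H j (x (φ1 l))) atTop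
      (𝓝 (G j xhat + H j xhat)) := by
    intro j
    have hGt : Tendsto (fun l => G j (x (φ1 l))) atTop (𝓝 (G j xhat)) :=
      ((hGcont j).tendsto xhat).comp hφ1tend
    have hsub : Tendsto (fun l => x (φ1 l)) atTop (𝓝[dom] xhat) := by
      rw [tendsto_nhdsWithin_iff]
      exact ⟨hφ1tend, Filter.Eventually.of_forall fun l => hx _⟩
    have hHt : Tendsto (fun l => H j (x (φ1 l))) atTop (𝓝 (H j xhat)) :=
      ((hHcont j xhat hxhatdom).tendsto).comp hsub
    exact hGt.add hHt
  have hhatle : ∀ k (j : Fin m), G j xhat + H j xhat ≤ G j (x k) + H j (x k) := by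
    intro k j
    refine le_of_tendsto (hFtend j) ?_
    filter_upwards [eventually_ge_atTop k] with l hl
    exact hFanti j (le_trans hl hφ1mono.le_apply)
  obtain ⟨L, hL⟩ := mpg_quasiFejer (fun k => sq_nonneg ‖x k - xhat‖) he0
    (hfejer xhat hxhatdom hhatle) hesum
  have hsub0 : Tendsto (fun l => ‖x (φ1 l) - xhat‖ ^ 2) atTop (𝓝 0) := by
    have h1 : Tendsto (fun l => x (φ1 l) - xhat) atTop (𝓝 0) := by
      simpa using hφ1tend.sub (tendsto_const_nhds (x := xhat))
    simpa using h1.norm.pow 2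
  have hL0 : L = 0 := by
    have h1 := hL.comp hφ1mono.tendsto_atTop
    exact tendsto_nhds_unique h1 hsub0
  have hxtend : Tendsto x atTop (𝓝 xhat) := by
    rw [tendsto_iff_norm_sub_tendsto_zero]
    have h1 : Tendsto (fun k => Real.sqrt (‖x k - xhat‖ ^ 2)) atTop (𝓝 (Real.sqrt 0)) :=
      (Real.continuous_sqrt.tendsto 0).comp (hL0 ▸ hL)
    have heq : (fun k => Real.sqrt (‖x k - xhat‖ ^ 2)) = fun k => ‖x k - xhat‖ := by
      funext k
      exact Real.sqrt_sq (norm_nonneg _)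
    rw [heq] at h1
    simpa using h1
  refine ⟨xhat, hxhatdom, hxtend, ?_⟩
  rintro ⟨y, hydom, hylt⟩
  -- minimal gap δ
  set δ : ℝ := Finset.univ.inf' Finset.univ_nonempty
    (fun j : Fin m => (G j xhat + H j xhat) - (G j y + H j y)) with hδdef
  have hδpos : 0 < δ := by
    rw [hδdef, Finset.lt_inf'_iff]
    intro j _
    linarith [hylt j]
  have hδle : ∀ i : Fin m, δ ≤ (G i xhat + H i xhat) - (G i y + H i y) := fun i =>
    Finset.inf'_le _ (Finset.mem_univ i)
  set Cy : ℝ := ‖y - xhat‖ ^ 2 + 1 with hCydef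
  have hCypos : 0 < Cy := by positivity
  have hyx : Tendsto (fun k => ‖y - x k‖ ^ 2) atTop (𝓝 (‖y - xhat‖ ^ 2)) := by
    have h1 : Tendsto (fun k => y - x k) atTop (𝓝 (y - xhat)) := tendsto_const_nhds.sub hxtend
    simpa using h1.norm.pow 2
  have hNev : ∀ᶠ k in atTop, ‖y - x k‖ ^ 2 ≤ Cy :=
    hyx (Iic_mem_nhds (by simp only [hCydef]; linarith))
  set lam : ℝ := min 1 (α * δ / Cy) with hlamdef
  have hlam0 : 0 < lam := lt_min one_pos (by positivity)
  have hlam1 : lam ≤ 1 := min_le_left _ _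
  have hρ : ∀ᶠ k in atTop, S k ≤ -(lam * δ / 2) := by
    filter_upwards [hNev] with k hk
    have hψy : ψ k y ≤ -δ := by
      simp only [hψdef]
      refine ciSup_le fun i => ?_
      have h1 := mpg_grad_ineq (hGconv i) (hGdiff i (x k)) y
      have h2 := hhatle k i
      have h3 := hδle i
      linarith
    have hw : (1 - lam) • x k + lam • y ∈ dom :=
      hdomconv (hx k) hydom (by linarith) hlam0.le (by ring)
    have hm2 := hmin2 k _ hw
    have hψw := hψconv k (x k) y (hx k) hydom lam hlam0.le hlam1
    rw [hψx k] at hψw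
    have hnw : ‖((1 - lam) • x k + lam • y) - x k‖ ^ 2 = lam ^ 2 * ‖y - x k‖ ^ 2 := by
      have hrepr : ((1 - lam) • x k + lam • y) - x k = lam • (y - x k) := by module
      rw [hrepr, norm_smul, Real.norm_eq_abs, abs_of_pos hlam0, mul_pow]
    rw [hnw] at hm2
    have hlam2 : lam ≤ α * δ / Cy := min_le_right _ _
    have h7 : lam * Cy ≤ α * δ := (le_div_iff₀ hCypos).1 hlam2
    have h6 : lam ^ 2 * ‖y - x k‖ ^ 2 ≤ lam ^ 2 * Cy :=
      mul_le_mul_of_nonneg_left hk (by positivity)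
    have h5 : lam ^ 2 * ‖y - x k‖ ^ 2 ≤ lam * (α * δ) := by nlinarith [hlam0.le]
    have h8 := mul_le_mul_of_nonneg_left hψw hα2.le
    have h10 := mul_le_mul_of_nonneg_left hψy
      (by positivity : (0:ℝ) ≤ 2 * α * lam)
    have h9 : 2 * α * S k ≤ -(α * (lam * δ)) := by
      nlinarith [hm2, h8, h10, h5, sq_nonneg ‖p k - x k‖]
    by_contra hcon
    push_neg at hcon
    nlinarith [h9, mul_pos hα (by linarith : (0:ℝ) < S k + lam * δ / 2)]
  have htmS : Tendsto (fun k => t k * (-S k)) atTop (𝓝 0) := htSsum.tendsto_atTop_zero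
  have hld : (0:ℝ) < lam * δ := mul_pos hlam0 hδpos
  have ht0 : Tendsto t atTop (𝓝 0) := by
    have hub : ∀ᶠ k in atTop, t k ≤ (2 / (lam * δ)) * (t k * (-S k)) := by
      filter_upwards [hρ] with k hk
      have h1 : lam * δ / 2 ≤ -S k := by linarith
      have h2 : t k * (lam * δ / 2) ≤ t k * (-S k) :=
        mul_le_mul_of_nonneg_left h1 (ht k).1.le
      have h3 := mul_le_mul_of_nonneg_left h2 (by positivity : (0:ℝ) ≤ 2 / (lam * δ))
      calc t k = (2 / (lam * δ)) * (t k * (lam * δ / 2)) := by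
            field_simp
          _ ≤ (2 / (lam * δ)) * (t k * (-S k)) := h3
    have hlb : ∀ᶠ k in atTop, 0 ≤ t k := Filter.Eventually.of_forall fun k => (ht k).1.le
    have hmul : Tendsto (fun k => (2 / (lam * δ)) * (t k * (-S k))) atTop (𝓝 0) := by
      simpa using htmS.const_mul (2 / (lam * δ))
    exact tendsto_of_tendsto_of_tendsto_of_le_of_le' tendsto_const_nhds hmul hlb hub
  have htd2 : Tendsto (fun k => t k * ‖p k - x k‖ ^ 2) atTop (𝓝 0) := by
    have hub : ∀ k, t k * ‖p k - x k‖ ^ 2 ≤ α * (t k * (-S k)) := by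
      intro k
      have h1 := mul_le_mul_of_nonneg_left (hd2 k) (ht k).1.le
      nlinarith [h1]
    have hlb : ∀ k, 0 ≤ t k * ‖p k - x k‖ ^ 2 := fun k =>
      mul_nonneg (ht k).1.le (sq_nonneg _)
    have hmul : Tendsto (fun k => α * (t k * (-S k))) atTop (𝓝 0) := by
      simpa using htmS.const_mul α
    exact tendsto_of_tendsto_of_tendsto_of_le_of_le tendsto_const_nhds hmul hlb hub
  have htd : Tendsto (fun k => t k * ‖p k - x k‖) atTop (𝓝 0) := by
    have h1 : Tendsto (fun k => t k * (t k * ‖p k - x k‖ ^ 2)) atTop (𝓝 0) := by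
      simpa using ht0.mul htd2
    have h2 := (Real.continuous_sqrt.tendsto 0).comp h1
    rw [Real.sqrt_zero] at h2
    have heq : (fun k => Real.sqrt (t k * (t k * ‖p k - x k‖ ^ 2)))
        = fun k => t k * ‖p k - x k‖ := by
      funext k
      rw [show t k * (t k * ‖p k - x k‖ ^ 2) = (t k * ‖p k - x k‖) ^ 2 by ring,
        Real.sqrt_sq (mul_nonneg (ht k).1.le (norm_nonneg _))]
    rw [show (fun k => Real.sqrt (t k * (t k * ‖p k - x k‖ ^ 2)))
        = Real.sqrt ∘ (fun k => t k * (t k * ‖p k - x k‖ ^ 2)) from rfl] at heq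
    rw [← heq]
    exact h2
  -- uniform bound machinery for G on a compact set
  have hK1 : IsCompact (Metric.closedBall xhat 1 ×ˢ
      Metric.closedBall (0 : EuclideanSpace ℝ (Fin n)) 1) :=
    (isCompact_closedBall _ _).prod (isCompact_closedBall _ _)
  have hKne : (Metric.closedBall xhat 1 ×ˢ
      Metric.closedBall (0 : EuclideanSpace ℝ (Fin n)) 1).Nonempty :=
    ⟨(xhat, 0), Set.mk_mem_prod (Metric.mem_closedBall_self one_pos.le)
      (Metric.mem_closedBall_self one_pos.le)⟩
  have hcontf : ∀ i : Fin m, Continuous fun q :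
      EuclideanSpace ℝ (Fin n) × EuclideanSpace ℝ (Fin n) =>
      G i (q.1 + q.2) - G i q.1 + ‖G' i q.1‖ * ‖q.2‖ :=
    fun i => (((hGcont i).comp (continuous_fst.add continuous_snd)).sub
      ((hGcont i).comp continuous_fst)).add
      ((((hG'cont i).comp continuous_fst).norm).mul continuous_snd.norm)
  choose q0 hq0mem hq0max using fun i : Fin m =>
    hK1.exists_isMaxOn hKne ((hcontf i).continuousOn)
  set M : ℝ := Finset.univ.sup' Finset.univ_nonempty
    (fun i : Fin m => G i ((q0 i).1 + (q0 i).2) - G i (q0 i).1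
      + ‖G' i (q0 i).1‖ * ‖(q0 i).2‖) with hMdef
  have hMbound : ∀ i : Fin m, ∀ u ∈ Metric.closedBall xhat 1,
      ∀ v : EuclideanSpace ℝ (Fin n), ‖v‖ ≤ 1 →
      G i (u + v) - G i u + ‖G' i u‖ * ‖v‖ ≤ M := by
    intro i u hu v hv
    have h1 := (isMaxOn_iff.1 (hq0max i)) (u, v)
      (Set.mk_mem_prod hu (by rwa [Metric.mem_closedBall, dist_zero_right]))
    rw [hMdef]
    exact le_trans h1 (Finset.le_sup'
      (fun i : Fin m => G i ((q0 i).1 + (q0 i).2) - G i (q0 i).1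
        + ‖G' i (q0 i).1‖ * ‖(q0 i).2‖) (Finset.mem_univ i))
  -- slope consequence of Armijo violation
  have hslopeviol : ∀ (k : ℕ) (i : Fin m) (tb s : ℝ), 0 < tb → tb ≤ s →
      G i (x k + tb • (p k - x k)) > G i (x k) + tb * ⟪G' i (x k), p k - x k⟫ +
        tb * (γ / 2) * ‖p k - x k‖ ^ 2 →
      s * ⟪G' i (x k), p k - x k⟫ + s * (γ / 2) * ‖p k - x k‖ ^ 2
        < G i (x k + s • (p k - x k)) - G i (x k) := by
    intro k i tb s htb0 htbs hviol
    have hs0 : 0 < s := lt_of_lt_of_le htb0 htbs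
    have hθ1 : tb / s ≤ 1 := (div_le_one hs0).2 htbs
    have hθ0 : 0 ≤ tb / s := by positivity
    have hc1 : (tb / s) * s = tb := div_mul_cancel₀ tb (ne_of_gt hs0)
    have hcomb : (tb / s) • (x k + s • (p k - x k)) + (1 - tb / s) • (x k)
        = x k + tb • (p k - x k) := by
      rw [smul_add, smul_smul, hc1, add_right_comm, ← add_smul,
        show tb / s + (1 - tb / s) = 1 by ring, one_smul]
    have hb0 : (0:ℝ) ≤ 1 - tb / s := by linarith
    have hG := (hGconv i).2 (Set.mem_univ (x k + s • (p k - x k))) (Set.mem_univ (x k))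
      hθ0 hb0 (by ring)
    rw [hcomb] at hG
    simp only [smul_eq_mul] at hG
    have h2 : tb * ⟪G' i (x k), p k - x k⟫ + tb * (γ / 2) * ‖p k - x k‖ ^ 2
        < (tb / s) * (G i (x k + s • (p k - x k)) - G i (x k)) := by linarith [hviol, hG]
    have h3 := mul_lt_mul_of_pos_left h2 (by positivity : (0:ℝ) < s / tb)
    have hst : (s / tb) * (tb / s) = 1 := by
      field_simp
    have e1 : (s / tb) * ((tb / s) * (G i (x k + s • (p k - x k)) - G i (x k)))
        = G i (x k + s • (p k - x k)) - G i (x k) := by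
      rw [← mul_assoc, hst, one_mul]
    have e2 : (s / tb) * (tb * ⟪G' i (x k), p k - x k⟫ + tb * (γ / 2) * ‖p k - x k‖ ^ 2)
        = s * ⟪G' i (x k), p k - x k⟫ + s * (γ / 2) * ‖p k - x k‖ ^ 2 := by
      have htbne : tb ≠ 0 := ne_of_gt htb0
      field_simp
    rw [e1, e2] at h3
    exact h3
  -- eventual facts
  have hxev : ∀ᶠ k in atTop, x k ∈ Metric.closedBall xhat 1 :=
    hxtend (Metric.closedBall_mem_nhds xhat one_pos)
  have htdev : ∀ᶠ k in atTop, t k * ‖p k - x k‖ ≤ τ₁ := htd (Iic_mem_nhds hτ₁)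
  have htev : ∀ᶠ k in atTop, t k < 1 := ht0 (Iio_mem_nhds one_pos)
  have htev2 : ∀ᶠ k in atTop, t k ≤ τ₁ := ht0 (Iic_mem_nhds hτ₁)
  have hdbd : ∀ᶠ k in atTop, ‖p k - x k‖ ≤ max 1 (2 * M / γ) := by
    filter_upwards [hxev, htdev, htev, htev2] with k hk1 hk2 hk3 hk4
    by_cases hdk : ‖p k - x k‖ ≤ 1
    · exact le_trans hdk (le_max_left _ _)
    push_neg at hdk
    have hd0 : (0:ℝ) < ‖p k - x k‖ := lt_trans one_pos hdk
    rcases hbacktrack k with h1 | ⟨i, tb, htb0, htble, hviol⟩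
    · linarith
    have h5 : tb * ‖p k - x k‖ ≤ 1 := by
      have h6 : tb * ‖p k - x k‖ ≤ (t k / τ₁) * ‖p k - x k‖ :=
        mul_le_mul_of_nonneg_right htble (norm_nonneg _)
      have h8 : (t k / τ₁) * ‖p k - x k‖ ≤ 1 := by
        rw [div_mul_eq_mul_div, div_le_one hτ₁]
        linarith [hk2]
      linarith
    have hσ : tb ≤ ‖p k - x k‖⁻¹ := by
      rw [← one_div, le_div_iff₀ hd0]
      exact h5
    have hsv := hslopeviol k i tb (‖p k - x k‖⁻¹) htb0 hσ hviol
    have hvnorm : ‖(‖p k - x k‖⁻¹ • (p k - x k))‖ = 1 := by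
      rw [norm_smul, Real.norm_eq_abs, abs_of_pos (by positivity),
        inv_mul_cancel₀ (ne_of_gt hd0)]
    have hMb := hMbound i (x k) hk1 _ (le_of_eq hvnorm)
    have hinner0 := abs_real_inner_le_norm (G' i (x k)) (‖p k - x k‖⁻¹ • (p k - x k))
    have hinner : -(‖G' i (x k)‖ * ‖(‖p k - x k‖⁻¹ • (p k - x k))‖)
        ≤ ⟪G' i (x k), ‖p k - x k‖⁻¹ • (p k - x k)⟫ := by
      have := abs_le.1 hinner0
      linarith [this.1]
    have hiv : ⟪G' i (x k), (‖p k - x k‖⁻¹ • (p k - x k))⟫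
        = ‖p k - x k‖⁻¹ * ⟪G' i (x k), p k - x k⟫ := real_inner_smul_right _ _ _
    have hσd : ‖p k - x k‖⁻¹ * (γ / 2) * ‖p k - x k‖ ^ 2 = (γ / 2) * ‖p k - x k‖ := by
      field_simp
    rw [hiv, hvnorm] at hinner
    have hfin : (γ / 2) * ‖p k - x k‖ < M := by
      rw [hvnorm] at hMb
      linarith [hsv, hMb, hinner, hσd]
    have hlast : ‖p k - x k‖ ≤ 2 * M / γ := by
      rw [le_div_iff₀ hγ]
      nlinarith [hfin]
    exact le_trans hlast (le_max_right _ _)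
  obtain ⟨N2, hN2⟩ := eventually_atTop.1
    (hxev.and (htdev.and (htev.and (htev2.and (hdbd.and hρ)))))
  have hsel : ∀ k, ∃ (i : Fin m) (tb : ℝ), N2 ≤ k →
      0 < tb ∧ tb ≤ t k / τ₁ ∧
      G i (x k + tb • (p k - x k)) > G i (x k) + tb * ⟪G' i (x k), p k - x k⟫ +
        tb * (γ / 2) * ‖p k - x k‖ ^ 2 := by
    intro k
    by_cases hk : N2 ≤ k
    · rcases hbacktrack k with h1 | ⟨i, tb, h2⟩
      · exfalso
        have := (hN2 k hk).2.2.1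
        linarith
      · exact ⟨i, tb, fun _ => h2⟩
    · exact ⟨j0, 1, fun h => absurd h hk⟩
  choose idx tbf htbf using hsel
  have hdball : ∀ l : ℕ, p (l + N2) - x (l + N2) ∈
      Metric.closedBall (0 : EuclideanSpace ℝ (Fin n)) (max 1 (2 * M / γ)) := by
    intro l
    rw [mem_closedBall_zero_iff]
    exact (hN2 (l + N2) (Nat.le_add_left _ _)).2.2.2.2.1
  obtain ⟨dhat, -, φ2, hφ2mono, hφ2tend⟩ :=
    tendsto_subseq_of_bounded Metric.isBounded_closedBall hdball
  have hfreq : ∃ i : Fin m, ∃ᶠ l in atTop, idx (φ2 l + N2) = i := by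
    by_contra hcon
    push_neg at hcon
    have hev : ∀ᶠ l in atTop, ∀ i : Fin m, idx (φ2 l + N2) ≠ i := by
      rw [eventually_all]
      intro i
      simpa using hcon i
    rcases hev.exists with ⟨l, hl⟩
    exact hl _ rfl
  obtain ⟨i0, hi0⟩ := hfreq
  obtain ⟨φ3, hφ3mono, hφ3eq⟩ := Filter.extraction_of_frequently_atTop hi0
  set K : ℕ → ℕ := fun l => φ2 (φ3 l) + N2 with hKdef
  have hKge : ∀ l, l ≤ K l := fun l =>
    le_trans hφ3mono.le_apply (le_trans hφ2mono.le_apply (Nat.le_add_right _ _))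
  have hKtop : Tendsto K atTop atTop := tendsto_atTop_mono hKge tendsto_id
  have hKN2 : ∀ l, N2 ≤ K l := fun l => Nat.le_add_left _ _
  have hxK : Tendsto (fun l => x (K l)) atTop (𝓝 xhat) := hxtend.comp hKtop
  have hdK : Tendsto (fun l => p (K l) - x (K l)) atTop (𝓝 dhat) := by
    have h1 := hφ2tend.comp hφ3mono.tendsto_atTop
    exact h1
  have hidxK : ∀ l, idx (K l) = i0 := fun l => hφ3eq l
  have htbK : ∀ l, 0 < tbf (K l) ∧ tbf (K l) ≤ t (K l) / τ₁ ∧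
      G (idx (K l)) (x (K l) + tbf (K l) • (p (K l) - x (K l)))
        > G (idx (K l)) (x (K l)) + tbf (K l) * ⟪G' (idx (K l)) (x (K l)), p (K l) - x (K l)⟫ +
          tbf (K l) * (γ / 2) * ‖p (K l) - x (K l)‖ ^ 2 :=
    fun l => htbf (K l) (hKN2 l)
  have htbK0 : Tendsto (fun l => tbf (K l)) atTop (𝓝 0) := by
    have hupper : Tendsto (fun l => t (K l) / τ₁) atTop (𝓝 0) := by
      simpa using (ht0.comp hKtop).div_const τ₁
    exact tendsto_of_tendsto_of_tendsto_of_le_of_le tendsto_const_nhds hupper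
      (fun l => (htbK l).1.le) (fun l => (htbK l).2.1)
  have hdhat2 : γ / 2 * ‖dhat‖ ^ 2 ≤ 0 := by
    have hqs : ∀ s : ℝ, 0 < s → γ / 2 * ‖dhat‖ ^ 2
        ≤ (G i0 (xhat + s • dhat) - G i0 xhat) / s - ⟪G' i0 xhat, dhat⟫ := by
      intro s hs
      have hev : ∀ᶠ l in atTop, γ / 2 * ‖p (K l) - x (K l)‖ ^ 2
          ≤ (G i0 (x (K l) + s • (p (K l) - x (K l))) - G i0 (x (K l))) / s
            - ⟪G' i0 (x (K l)), p (K l) - x (K l)⟫ := by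
        have hevtb : ∀ᶠ l in atTop, tbf (K l) ≤ s := htbK0 (Iic_mem_nhds hs)
        filter_upwards [hevtb] with l hl
        have hviol := (htbK l).2.2
        rw [hidxK l] at hviol
        have hsv := hslopeviol (K l) i0 (tbf (K l)) s (htbK l).1 hl hviol
        have h2 : (γ / 2 * ‖p (K l) - x (K l)‖ ^ 2 + ⟪G' i0 (x (K l)), p (K l) - x (K l)⟫) * s
            < G i0 (x (K l) + s • (p (K l) - x (K l))) - G i0 (x (K l)) := by
          rw [show (γ / 2 * ‖p (K l) - x (K l)‖ ^ 2
              + ⟪G' i0 (x (K l)), p (K l) - x (K l)⟫) * s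
            = s * ⟪G' i0 (x (K l)), p (K l) - x (K l)⟫
              + s * (γ / 2) * ‖p (K l) - x (K l)‖ ^ 2 from by ring]
          exact hsv
        have h3 := (le_div_iff₀ hs).2 h2.le
        linarith
      have hlhs : Tendsto (fun l => γ / 2 * ‖p (K l) - x (K l)‖ ^ 2) atTop
          (𝓝 (γ / 2 * ‖dhat‖ ^ 2)) := by
        have h1 := hdK.norm.pow 2
        simpa using h1.const_mul (γ / 2)
      have hrhs : Tendsto (fun l =>
          (G i0 (x (K l) + s • (p (K l) - x (K l))) - G i0 (x (K l))) / s
            - ⟪G' i0 (x (K l)), p (K l) - x (K l)⟫) atTop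
          (𝓝 ((G i0 (xhat + s • dhat) - G i0 xhat) / s - ⟪G' i0 xhat, dhat⟫)) := by
        have h1 : Tendsto (fun l => x (K l) + s • (p (K l) - x (K l))) atTop
            (𝓝 (xhat + s • dhat)) := hxK.add (hdK.const_smul s)
        have h2 := ((hGcont i0).tendsto _).comp h1
        have h3 := ((hGcont i0).tendsto _).comp hxK
        have h4 := ((hG'cont i0).tendsto _).comp hxK
        exact ((h2.sub h3).div_const s).sub (h4.inner hdK)
      exact le_of_tendsto_of_tendsto hlhs hrhs hev
    have hline : HasDerivAt (fun s : ℝ => G i0 (xhat + s • dhat)) ⟪G' i0 xhat, dhat⟫ 0 := by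
      have hl : HasDerivAt (fun s : ℝ => xhat + s • dhat) dhat (0 : ℝ) := by
        simpa using ((hasDerivAt_id (0:ℝ)).smul_const dhat).const_add xhat
      have h0 : HasFDerivAt (G i0) (InnerProductSpace.toDual ℝ _ (G' i0 xhat))
          (xhat + (0:ℝ) • dhat) := by
        simpa using (hGdiff i0 xhat).hasFDerivAt
      have h0' := h0.comp_hasDerivAt (0:ℝ) hl
      simp only [InnerProductSpace.toDual_apply_apply] at h0'
      exact h0'
    have hslopet := (hasDerivAt_iff_tendsto_slope.1 hline).mono_left
      (nhdsWithin_mono _ (fun s hs => ne_of_gt hs : Set.Ioi (0:ℝ) ⊆ {0}ᶜ))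
    have hq0 : Tendsto (fun s => (G i0 (xhat + s • dhat) - G i0 xhat) / s
        - ⟪G' i0 xhat, dhat⟫) (𝓝[>] (0:ℝ)) (𝓝 0) := by
      have h5 := hslopet.sub_const ⟪G' i0 xhat, dhat⟫
      rw [sub_self] at h5
      refine h5.congr' ?_
      filter_upwards [self_mem_nhdsWithin] with s hs
      simp [slope_def_field]
    refine ge_of_tendsto hq0 ?_
    filter_upwards [self_mem_nhdsWithin] with s hs
    exact hqs s hs
  have hdhat0 : dhat = 0 := by
    have h1 : ‖dhat‖ ^ 2 ≤ 0 := by nlinarith [hdhat2]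
    have h2 : ‖dhat‖ = 0 := by nlinarith [sq_nonneg ‖dhat‖, norm_nonneg dhat]
    exact norm_eq_zero.1 h2
  have hdK0 : Tendsto (fun l => p (K l) - x (K l)) atTop (𝓝 0) := hdhat0 ▸ hdK
  have hpK : Tendsto (fun l => p (K l)) atTop (𝓝 xhat) := by
    have h1 := hxK.add hdK0
    rw [add_zero] at h1
    refine h1.congr fun l => ?_
    abel
  have hterm : Tendsto (fun l => ⟪G' i0 (x (K l)), p (K l) - x (K l)⟫
      + H i0 (p (K l)) - H i0 (x (K l))) atTop (𝓝 0) := by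
    have h4 : Tendsto (fun l => G' i0 (x (K l))) atTop (𝓝 (G' i0 xhat)) :=
      ((hG'cont i0).tendsto _).comp hxK
    have h5 : Tendsto (fun l => ⟪G' i0 (x (K l)), p (K l) - x (K l)⟫) atTop
        (𝓝 ⟪G' i0 xhat, (0 : EuclideanSpace ℝ (Fin n))⟫) := h4.inner hdK0
    rw [inner_zero_right] at h5
    have h6 : Tendsto (fun l => H i0 (p (K l))) atTop (𝓝 (H i0 xhat)) := by
      refine ((hHcont i0 xhat hxhatdom).tendsto).comp ?_
      rw [tendsto_nhdsWithin_iff]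
      exact ⟨hpK, Filter.Eventually.of_forall fun l => hp _⟩
    have h7 : Tendsto (fun l => H i0 (x (K l))) atTop (𝓝 (H i0 xhat)) := by
      refine ((hHcont i0 xhat hxhatdom).tendsto).comp ?_
      rw [tendsto_nhdsWithin_iff]
      exact ⟨hxK, Filter.Eventually.of_forall fun l => hx _⟩
    simpa using (h5.add h6).sub h7
  have hcontra : (0:ℝ) ≤ -(lam * δ / 2) := by
    refine le_of_tendsto hterm ?_
    refine Filter.Eventually.of_forall fun l => ?_
    have h8 := hterm_le (K l) i0
    have h9 := (hN2 (K l) (hKN2 l)).2.2.2.2.2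
    linarith
  nlinarith [hcontra, hld]
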